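/- Let A, B, K be points in the Euclidean plane ℝ² with B ≠ A and K ≠ A, and let ε ≥ 0. If the angle ∠KAB (the angle at vertex A between the rays AK and AB) is at most arctan(ε / dist(A, K)), then the distance from K to the line through A and B is at most ε. -/

import Mathlib

open EuclideanGeometry

theorem stmt_13 (A B K : EuclideanSpace ℝ (Fin 2)) (hB : B ≠ A) (hK : K ≠ A)
    (ε : ℝ) (hε : 0 ≤ ε)
    (hangle : EuclideanGeometry.angle K A B ≤ Real.arctan (ε / dist A K)) :
    Metric.infDist K
      ((affineSpan ℝ ({A, B} : Set (EuclideanSpace ℝ (Fin 2)))) :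
        Set (EuclideanSpace ℝ (Fin 2))) ≤ ε := by
  set v : EuclideanSpace ℝ (Fin 2) := K -ᵥ A with hvdef
  set w : EuclideanSpace ℝ (Fin 2) := B -ᵥ A with hwdef
  have hv : v ≠ 0 := vsub_ne_zero.mpr hK
  have hw : w ≠ 0 := vsub_ne_zero.mpr hB
  have hvn : (0:ℝ) < ‖v‖ := norm_pos_iff.mpr hv
  have hwn : (0:ℝ) < ‖w‖ := norm_pos_iff.mpr hw
  have hd : dist A K = ‖v‖ := by
    rw [dist_comm, dist_eq_norm_vsub (EuclideanSpace ℝ (Fin 2))]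
  set θ := EuclideanGeometry.angle K A B with hθ
  have hθv : θ = InnerProductGeometry.angle v w := rfl
  have h0 : 0 ≤ θ := InnerProductGeometry.angle_nonneg _ _
  have hlt : θ < Real.pi / 2 :=
    lt_of_le_of_lt hangle (Real.arctan_lt_pi_div_two _)
  have hcos : 0 < Real.cos θ :=
    Real.cos_pos_of_mem_Ioo ⟨by linarith [Real.pi_pos], hlt⟩
  have hsinθ0 : 0 ≤ Real.sin θ :=
    Real.sin_nonneg_of_nonneg_of_le_pi h0
      (le_trans hlt.le (by linarith [Real.pi_pos]))
  have htan : Real.tan θ ≤ ε / ‖v‖ := by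
    have hmem1 : θ ∈ Set.Ioo (-(Real.pi/2)) (Real.pi/2) :=
      ⟨by linarith [Real.pi_pos], hlt⟩
    have hmem2 : Real.arctan (ε / dist A K) ∈ Set.Ioo (-(Real.pi/2)) (Real.pi/2) :=
      ⟨Real.neg_pi_div_two_lt_arctan _, Real.arctan_lt_pi_div_two _⟩
    have := Real.strictMonoOn_tan.monotoneOn hmem1 hmem2 hangle
    rwa [Real.tan_arctan, hd] at this
  have hsin : Real.sin θ ≤ ε / ‖v‖ := by
    have htan0 : 0 ≤ Real.tan θ := by
      rw [Real.tan_eq_sin_div_cos]; positivity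
    have hseq : Real.sin θ = Real.tan θ * Real.cos θ := by
      rw [Real.tan_eq_sin_div_cos]; field_simp
    calc Real.sin θ = Real.tan θ * Real.cos θ := hseq
      _ ≤ Real.tan θ * 1 := by
          exact mul_le_mul_of_nonneg_left (Real.cos_le_one θ) htan0
      _ = Real.tan θ := mul_one _
      _ ≤ ε / ‖v‖ := htan
  have key : ‖v‖ * Real.sin θ ≤ ε := by
    have := mul_le_mul_of_nonneg_left hsin hvn.le
    rwa [mul_div_cancel₀ _ hvn.ne'] at this
  -- geometric part
  set t : ℝ := (inner ℝ v w : ℝ) / ‖w‖ ^ 2 with htdef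
  have hPmem : AffineMap.lineMap A B t ∈
      (affineSpan ℝ ({A, B} : Set (EuclideanSpace ℝ (Fin 2))) :
        Set (EuclideanSpace ℝ (Fin 2))) :=
    AffineMap.lineMap_mem_affineSpan_pair t A B
  have hle : Metric.infDist K
      ((affineSpan ℝ ({A, B} : Set (EuclideanSpace ℝ (Fin 2)))) :
        Set (EuclideanSpace ℝ (Fin 2))) ≤ dist K (AffineMap.lineMap A B t) :=
    Metric.infDist_le_dist_of_mem hPmem
  have hdistP : dist K (AffineMap.lineMap A B t) = ‖v - t • w‖ := by
    rw [dist_eq_norm_vsub (EuclideanSpace ℝ (Fin 2)), AffineMap.lineMap_apply,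
      vsub_vadd_eq_vsub_sub]
  have hcosθ : Real.cos θ = (inner ℝ v w : ℝ) / (‖v‖ * ‖w‖) := by
    rw [hθv, InnerProductGeometry.cos_angle]
  have hsq : ‖v - t • w‖ ^ 2 = (‖v‖ * Real.sin θ) ^ 2 := by
    have hsin2 : Real.sin θ ^ 2 = 1 - Real.cos θ ^ 2 := by
      have := Real.sin_sq_add_cos_sq θ; linarith
    have hnorm : ‖v - t • w‖ ^ 2
        = ‖v‖ ^ 2 - 2 * (inner ℝ v (t • w) : ℝ) + ‖t • w‖ ^ 2 := by
      rw [norm_sub_sq_real]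
    rw [hnorm, real_inner_smul_right, norm_smul, Real.norm_eq_abs, mul_pow, sq_abs,
      mul_pow ‖v‖, hsin2, hcosθ, htdef]
    field_simp
    ring
  have heq : ‖v - t • w‖ = ‖v‖ * Real.sin θ := by
    have h1 : 0 ≤ ‖v - t • w‖ := norm_nonneg _
    have h2 : 0 ≤ ‖v‖ * Real.sin θ := mul_nonneg hvn.le hsinθ0
    nlinarith [hsq]
  calc Metric.infDist K _ ≤ dist K (AffineMap.lineMap A B t) := hle
    _ = ‖v‖ * Real.sin θ := by rw [hdistP, heq]
    _ ≤ ε := key
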